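/- Let n ≥ 1 and let x_1,…,x_n be distinct complex numbers and y_1,…,y_n distinct complex numbers with x_i ≠ y_j for all i,j. Assume additionally x_i ≠ −1 and y_j ≠ 0 for all i, j. Let C be the Cauchy matrix C_{ij} = 1/(x_i − y_j), let C_{ℓ,k} denote the (n−1)×(n−1) matrix obtained from C by deleting row ℓ and column k, and set A(ζ) = ∏_{i=1}^n (ζ − x_i), B(ζ) = ∏_{i=1}^n (ζ − y_i). Then ∑_{ℓ=1}^n ∑_{k=1}^n (−1)^{ℓ+k} · ( x_ℓ / ((x_ℓ+1) y_k) ) · det(C_{ℓ,k}) = ( A(0)/B(0) ) · ( 1 − B(−1)/A(−1) ) · det(C). -/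

import Mathlib

open scoped BigOperators

open Polynomial Finset Matrix

lemma lag_sum {n : ℕ} (y : Fin (n+1) → ℂ) (hy : Function.Injective y)
    (P : ℂ[X]) (hP : P.degree < ((n+1 : ℕ) : WithBot ℕ)) (z : ℂ) (hz : ∀ k, z ≠ y k) :
    ∑ k : Fin (n+1), (∏ m ∈ Finset.univ.erase k, (y k - y m)⁻¹) * (z - y k)⁻¹ * P.eval (y k)
      = P.eval z * (∏ m, (z - y m))⁻¹ := by
  have hinj : Set.InjOn y (Finset.univ : Finset (Fin (n+1))) := fun a _ b _ h => hy h
  have hdeg : P.degree < ((Finset.univ : Finset (Fin (n+1))).card : WithBot ℕ) := by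
    simpa using hP
  have h1 := Lagrange.eq_interpolate (f := P) hinj hdeg
  have h2 := Lagrange.eval_interpolate_not_at_node (s := Finset.univ) (v := y)
      (fun i => P.eval (y i)) (x := z) (fun i _ => hz i)
  rw [← h1, Lagrange.eval_nodal] at h2
  have hnz : (∏ m, (z - y m)) ≠ 0 :=
    Finset.prod_ne_zero_iff.mpr fun m _ => sub_ne_zero_of_ne (hz m)
  rw [h2, mul_comm (∏ i : Fin (n+1), (z - y i)), mul_assoc, mul_inv_cancel₀ hnz, mul_one]
  rfl


/-- Summation identity for minors of a Cauchy matrix (Lemma: sumCauchyq).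
The matrix size is `n + 1 ≥ 1`; `C_{ℓ,k}` is realized as the `succAbove`
submatrix, and `(-1)^{ℓ+k}` with 1-based `ℓ, k` equals `(-1)^{ℓ₀+k₀}` for the
0-based indices `ℓ₀, k₀`. Here `A(ζ) = ∏ (ζ - x_i)` and `B(ζ) = ∏ (ζ - y_i)`. -/
theorem cauchy_minor_sum
    (n : ℕ) (x y : Fin (n + 1) → ℂ)
    (hx : Function.Injective x) (hy : Function.Injective y)
    (hxy : ∀ i j, x i ≠ y j)
    (hx1 : ∀ i, x i ≠ -1) (hy0 : ∀ j, y j ≠ 0) :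
    (∑ ℓ : Fin (n + 1), ∑ k : Fin (n + 1),
        (-1 : ℂ) ^ ((ℓ : ℕ) + (k : ℕ)) * (x ℓ / ((x ℓ + 1) * y k)) *
          Matrix.det ((Matrix.of fun i j : Fin (n + 1) => 1 / (x i - y j)).submatrix
            ℓ.succAbove k.succAbove)) =
      ((∏ i, ((0 : ℂ) - x i)) / ∏ i, ((0 : ℂ) - y i)) *
        (1 - (∏ i, ((-1 : ℂ) - y i)) / ∏ i, ((-1 : ℂ) - x i)) *
        Matrix.det (Matrix.of fun i j : Fin (n + 1) => 1 / (x i - y j)) := by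
  classical
  set M : Matrix (Fin (n+1)) (Fin (n+1)) ℂ := Matrix.of fun i j => 1 / (x i - y j) with hM
  set A : ℂ[X] := ∏ i, (X - Polynomial.C (x i)) with hA
  set B : ℂ[X] := ∏ i, (X - Polynomial.C (y i)) with hB
  have hAeval : ∀ z : ℂ, A.eval z = ∏ i, (z - x i) := by
    intro z; simp [hA, eval_prod]
  have hBeval : ∀ z : ℂ, B.eval z = ∏ i, (z - y i) := by
    intro z; simp [hB, eval_prod]
  have hAm : A.eval (-1) ≠ 0 := by
    rw [hAeval]
    exact Finset.prod_ne_zero_iff.mpr fun i _ =>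
      sub_ne_zero_of_ne fun h => (hx1 i) (by linear_combination -h)
  have hB0 : B.eval 0 ≠ 0 := by
    rw [hBeval]
    exact Finset.prod_ne_zero_iff.mpr fun i _ =>
      sub_ne_zero_of_ne fun h => (hy0 i) (by linear_combination -h)
  have hBx : ∀ ℓ, B.eval (x ℓ) ≠ 0 := fun ℓ => by
    rw [hBeval]
    exact Finset.prod_ne_zero_iff.mpr fun i _ => sub_ne_zero_of_ne (hxy ℓ i)
  have hAx : ∀ ℓ, A.eval (x ℓ) = 0 := fun ℓ => by
    rw [hAeval]
    exact Finset.prod_eq_zero (Finset.mem_univ ℓ) (sub_self _)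
  have hx1' : ∀ ℓ, x ℓ + 1 ≠ 0 := fun ℓ h => hx1 ℓ (by linear_combination h)
  set c : ℂ := B.eval (-1) / A.eval (-1) - 1 with hc
  set N : ℂ[X] := X * B - (X - Polynomial.C c) * A with hN
  have hNroot : N.eval (-1) = 0 := by
    simp only [hN, eval_sub, eval_mul, eval_X, eval_C, hc]
    field_simp
    ring
  set P : ℂ[X] := N /ₘ (X - Polynomial.C (-1)) with hP
  have hmul : N = (X - Polynomial.C (-1)) * P := by
    have h := Polynomial.modByMonic_add_div N (X - Polynomial.C (-1 : ℂ))
    rw [Polynomial.modByMonic_X_sub_C_eq_C_eval, hNroot, map_zero, zero_add] at h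
    exact h.symm
  -- degree bound for P
  have hAmonic : A.Monic := monic_prod_of_monic _ _ fun i _ => monic_X_sub_C _
  have hBmonic : B.Monic := monic_prod_of_monic _ _ fun i _ => monic_X_sub_C _
  have hAdeg : A.degree = ((n+1 : ℕ) : WithBot ℕ) := by
    rw [hA, Polynomial.degree_prod]
    simp [Polynomial.degree_X_sub_C]
  have hBdeg : B.degree = ((n+1 : ℕ) : WithBot ℕ) := by
    rw [hB, Polynomial.degree_prod]
    simp [Polynomial.degree_X_sub_C]
  have hXBmon : (X * B).Monic := (monic_X).mul hBmonic
  have hXAmon : (X * A).Monic := (monic_X).mul hAmonic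
  have hXBdeg : (X * B).degree = ((n+2 : ℕ) : WithBot ℕ) := by
    rw [Polynomial.degree_mul, Polynomial.degree_X, hBdeg]
    norm_cast
    omega
  have hXAdeg : (X * A).degree = ((n+2 : ℕ) : WithBot ℕ) := by
    rw [Polynomial.degree_mul, Polynomial.degree_X, hAdeg]
    norm_cast
    omega
  have hNdeg : N.degree < ((n+2 : ℕ) : WithBot ℕ) := by
    have hN' : N = (X * B - X * A) + Polynomial.C c * A := by
      rw [hN]; ring
    have h1 : (X * B - X * A).degree < ((n+2 : ℕ) : WithBot ℕ) := by
      rw [← hXBdeg]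
      exact Polynomial.degree_sub_lt (hXBdeg.trans hXAdeg.symm) hXBmon.ne_zero
        (hXBmon.leadingCoeff.trans hXAmon.leadingCoeff.symm)
    have h2 : (Polynomial.C c * A).degree < ((n+2 : ℕ) : WithBot ℕ) := by
      calc (Polynomial.C c * A).degree ≤ 0 + A.degree :=
            (Polynomial.degree_mul_le _ _).trans
              (add_le_add (Polynomial.degree_C_le) le_rfl)
        _ < ((n+2 : ℕ) : WithBot ℕ) := by
            rw [zero_add, hAdeg]
            exact_mod_cast Nat.lt_succ_self (n+1)
    rw [hN']
    exact (Polynomial.degree_add_le _ _).trans_lt (max_lt h1 h2)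
  have hPdeg : P.degree < ((n+1 : ℕ) : WithBot ℕ) := by
    by_cases hP0 : P = 0
    · rw [hP0, Polynomial.degree_zero]
      exact WithBot.bot_lt_coe _
    · have hN0 : N ≠ 0 := by
        rw [hmul]
        exact mul_ne_zero (Polynomial.X_sub_C_ne_zero _) hP0
      have hnd : N.natDegree < n + 2 :=
        (Polynomial.natDegree_lt_iff_degree_lt hN0).mpr hNdeg
      have : N.natDegree = 1 + P.natDegree := by
        rw [hmul, Polynomial.natDegree_mul (Polynomial.X_sub_C_ne_zero _) hP0,
          Polynomial.natDegree_X_sub_C]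
      have hpd : P.natDegree < n + 1 := by omega
      exact (Polynomial.natDegree_lt_iff_degree_lt hP0).mp hpd
  -- the weight vector
  set w : Fin (n+1) → ℂ :=
    fun k => (∏ m ∈ Finset.univ.erase k, (y k - y m)⁻¹) * P.eval (y k) with hw
  set f : Fin (n+1) → ℂ := fun ℓ => x ℓ / (x ℓ + 1) with hf
  have hMw : M *ᵥ w = f := by
    funext ℓ
    have hz : ∀ k, x ℓ ≠ y k := fun k => hxy ℓ k
    have hls := lag_sum y hy P hPdeg (x ℓ) hz
    have : (M *ᵥ w) ℓ = ∑ k : Fin (n+1),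
        (∏ m ∈ Finset.univ.erase k, (y k - y m)⁻¹) * (x ℓ - y k)⁻¹ * P.eval (y k) := by
      simp only [Matrix.mulVec, dotProduct, hM, Matrix.of_apply, hw]
      exact Finset.sum_congr rfl fun k _ => by ring
    rw [this, hls, ← hBeval]
    have hevN : (x ℓ + 1) * P.eval (x ℓ) = x ℓ * B.eval (x ℓ) := by
      have := congrArg (Polynomial.eval (x ℓ)) hmul
      simp only [hN, eval_sub, eval_mul, eval_X, eval_C, hAx ℓ, mul_zero, sub_zero] at this
      rw [this]; ring
    have hPeval : P.eval (x ℓ) = x ℓ / (x ℓ + 1) * B.eval (x ℓ) := by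
      rw [div_mul_eq_mul_div, eq_div_iff (hx1' ℓ)]
      linear_combination hevN
    show P.eval (x ℓ) * (B.eval (x ℓ))⁻¹ = x ℓ / (x ℓ + 1)
    rw [hPeval, mul_assoc, mul_inv_cancel₀ (hBx ℓ), mul_one]
  have hP0eval : P.eval 0 = c * A.eval 0 := by
    have := congrArg (Polynomial.eval (0 : ℂ)) hmul
    simp only [hN, eval_sub, eval_mul, eval_X, eval_C] at this
    rw [zero_mul, zero_sub, zero_sub, neg_mul, sub_neg_eq_add, zero_add] at this
    linear_combination -this
  have hgw : ∑ k : Fin (n+1), (y k)⁻¹ * w k = -(c * A.eval 0 * (B.eval 0)⁻¹) := by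
    have hz : ∀ k, (0 : ℂ) ≠ y k := fun k h => hy0 k h.symm
    have hls := lag_sum y hy P hPdeg 0 hz
    have : ∑ k : Fin (n+1), (y k)⁻¹ * w k = -∑ k : Fin (n+1),
        (∏ m ∈ Finset.univ.erase k, (y k - y m)⁻¹) * (0 - y k)⁻¹ * P.eval (y k) := by
      rw [← Finset.sum_neg_distrib]
      refine Finset.sum_congr rfl fun k _ => ?_
      rw [hw]
      have : (0 - y k)⁻¹ = -(y k)⁻¹ := by rw [zero_sub, inv_neg]
      rw [this]; ring
    rw [this, hls, hP0eval, ← hBeval]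
  -- adjugate identity
  have hadj : Matrix.adjugate M *ᵥ f = M.det • w := by
    rw [← hMw, Matrix.mulVec_mulVec, Matrix.adjugate_mul, Matrix.smul_mulVec,
      Matrix.one_mulVec]
  -- rewrite the LHS
  have hLHS : (∑ ℓ : Fin (n + 1), ∑ k : Fin (n + 1),
        (-1 : ℂ) ^ ((ℓ : ℕ) + (k : ℕ)) * (x ℓ / ((x ℓ + 1) * y k)) *
          Matrix.det (M.submatrix ℓ.succAbove k.succAbove))
      = ∑ k : Fin (n+1), (y k)⁻¹ * (Matrix.adjugate M *ᵥ f) k := by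
    rw [Finset.sum_comm]
    refine Finset.sum_congr rfl fun k _ => ?_
    simp only [Matrix.mulVec, dotProduct]
    rw [Finset.mul_sum]
    refine Finset.sum_congr rfl fun ℓ _ => ?_
    rw [Matrix.adjugate_fin_succ_eq_det_submatrix]
    simp only [hf, div_eq_mul_inv, mul_inv]
    ring
  rw [hLHS, hadj]
  simp only [Pi.smul_apply, smul_eq_mul]
  have : ∑ k : Fin (n+1), (y k)⁻¹ * (M.det * w k)
      = M.det * ∑ k : Fin (n+1), (y k)⁻¹ * w k := by
    rw [Finset.mul_sum]
    exact Finset.sum_congr rfl fun k _ => by ring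
  rw [this, hgw, ← hAeval, ← hBeval, ← hAeval, ← hBeval, hc]
  field_simp
  ring
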